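/- In the polynomial ring F_2[w, t], set d_2 = w^2 + wt + t^2 and d_3 = wt(w + t). Then the F_2-subalgebra F_2[w, d_2, d_3] of F_2[w, t] is a free module over its subring F_2[d_2, d_3] with basis {1, w, w^2}. -/
import Mathlib


open MvPolynomial

set_option maxHeartbeats 1000000 in
/-- In `F₂[w, t]`, with Dickson invariants `d₂ = w² + wt + t²` and
`d₃ = wt(w + t)`, the subalgebra `F₂[w, d₂, d₃]` is a free module over its
subring `F₂[d₂, d₃]` with basis `{1, w, w²}`. -/
theorem adjoin_w_dickson_free_over_dickson
    (w t d₂ d₃ : MvPolynomial (Fin 2) (ZMod 2))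
    (hw : w = X 0) (ht : t = X 1)
    (hd₂ : d₂ = w ^ 2 + w * t + t ^ 2) (hd₃ : d₃ = w * t * (w + t)) :
    (∀ p : MvPolynomial (Fin 2) (ZMod 2),
        p ∈ Algebra.adjoin (ZMod 2) ({w, d₂, d₃} : Set (MvPolynomial (Fin 2) (ZMod 2))) ↔
        ∃ c : Fin 3 → ↥(Algebra.adjoin (ZMod 2) ({d₂, d₃} : Set (MvPolynomial (Fin 2) (ZMod 2)))),
          p = ∑ i : Fin 3, (c i : MvPolynomial (Fin 2) (ZMod 2)) * w ^ (i : ℕ)) ∧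
    (∀ c : Fin 3 → ↥(Algebra.adjoin (ZMod 2) ({d₂, d₃} : Set (MvPolynomial (Fin 2) (ZMod 2)))),
        ∑ i : Fin 3, (c i : MvPolynomial (Fin 2) (ZMod 2)) * w ^ (i : ℕ) = 0 →
        ∀ i, c i = 0) := by
  subst hw ht hd₂ hd₃
  set P := MvPolynomial (Fin 2) (ZMod 2) with hP
  set W : P := X 0 with hW
  set T : P := X 1 with hT
  set D2 : P := W ^ 2 + W * T + T ^ 2 with hD2
  set D3 : P := W * T * (W + T) with hD3
  set A := Algebra.adjoin (ZMod 2) ({D2, D3} : Set P) with hA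
  have hd2A : D2 ∈ A := Algebra.subset_adjoin (by simp)
  have hd3A : D3 ∈ A := Algebra.subset_adjoin (by simp)
  have hcoe2 : ((⟨D2, hd2A⟩ : A) : P) = D2 := rfl
  have hcoe3 : ((⟨D3, hd3A⟩ : A) : P) = D3 := rfl
  have hchar : (2 : P) = 0 := by
    have h : (2 : ZMod 2) = 0 := by decide
    calc (2 : P) = C (2 : ZMod 2) := (map_ofNat C 2).symm
    _ = 0 := by rw [h, map_zero]
  have hw3 : W ^ 3 = D2 * W + D3 := by
    rw [hD2, hD3]
    linear_combination (-(W ^ 2 * T) - W * T ^ 2) * hchar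
  constructor
  · intro p
    constructor
    · intro hp
      induction hp using Algebra.adjoin_induction with
      | mem x hx =>
        rcases hx with rfl | rfl | rfl
        · exact ⟨![0, 1, 0], by simp [Fin.sum_univ_three]⟩
        · exact ⟨![⟨D2, hd2A⟩, 0, 0], by simp [Fin.sum_univ_three]⟩
        · exact ⟨![⟨D3, hd3A⟩, 0, 0], by simp [Fin.sum_univ_three]⟩
      | algebraMap r =>
        exact ⟨![⟨algebraMap (ZMod 2) P r, Subalgebra.algebraMap_mem A r⟩, 0, 0],
          by simp [Fin.sum_univ_three]; rfl⟩
      | add x y hx hy ihx ihy =>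
        obtain ⟨a, ha⟩ := ihx
        obtain ⟨b, hb⟩ := ihy
        refine ⟨fun i => a i + b i, ?_⟩
        rw [ha, hb]
        simp only [Fin.sum_univ_three, Subalgebra.coe_add]
        ring
      | mul x y hx hy ihx ihy =>
        obtain ⟨a, ha⟩ := ihx
        obtain ⟨b, hb⟩ := ihy
        refine ⟨![a 0 * b 0 + ⟨D3, hd3A⟩ * (a 1 * b 2 + a 2 * b 1),
          a 0 * b 1 + a 1 * b 0 + ⟨D2, hd2A⟩ * (a 1 * b 2 + a 2 * b 1)
            + ⟨D3, hd3A⟩ * (a 2 * b 2),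
          a 0 * b 2 + a 1 * b 1 + a 2 * b 0 + ⟨D2, hd2A⟩ * (a 2 * b 2)], ?_⟩
        rw [ha, hb]
        simp only [Fin.sum_univ_three, Matrix.cons_val_zero, Matrix.cons_val_one,
          Matrix.head_cons, Matrix.cons_val_two, Matrix.tail_cons,
          Subalgebra.coe_add, Subalgebra.coe_mul, hcoe2, hcoe3, Fin.val_zero,
          Fin.val_one, pow_zero, pow_one]
        norm_num
        clear_value D2 D3
        linear_combination ((a 1 : P) * (b 2 : P) + (a 2 : P) * (b 1 : P)
          + ((a 2 : P) * (b 2 : P)) * W) * hw3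
    · rintro ⟨c, rfl⟩
      have hle : A ≤ Algebra.adjoin (ZMod 2) ({W, D2, D3} : Set P) :=
        Algebra.adjoin_mono (by intro x hx; simp at hx; rcases hx with rfl | rfl <;> simp)
      refine Subalgebra.sum_mem _ fun i _ => Subalgebra.mul_mem _ (hle (c i).2)
        (Subalgebra.pow_mem _ (Algebra.subset_adjoin (by simp)) _)
  · intro c hc i
    set σ : P →ₐ[ZMod 2] P := aeval ![T, W] with hσ
    set τ : P →ₐ[ZMod 2] P := aeval ![W + T, T] with hτ
    have fix : ∀ (f : P →ₐ[ZMod 2] P), f D2 = D2 → f D3 = D3 → ∀ x ∈ A, f x = x := by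
      intro f h2 h3 x hx
      induction hx using Algebra.adjoin_induction with
      | mem x hx => rcases hx with rfl | rfl <;> assumption
      | algebraMap r => exact f.commutes r
      | add x y hx hy ihx ihy => rw [map_add, ihx, ihy]
      | mul x y hx hy ihx ihy => rw [map_mul, ihx, ihy]
    have hσW : σ W = T := by rw [hσ, hW, aeval_X]; simp
    have hσT : σ T = W := by rw [hσ, hT, aeval_X]; simp
    have hτW : τ W = W + T := by rw [hτ, hW, aeval_X]; simp
    have hτT : τ T = T := by rw [hτ, hT, aeval_X]; simp
    have hσ2 : σ D2 = D2 := by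
      rw [hD2, map_add, map_add, map_mul, map_pow, map_pow, hσW, hσT]; ring
    have hσ3 : σ D3 = D3 := by
      rw [hD3, map_mul, map_mul, map_add, hσW, hσT]; ring
    have hτ2 : τ D2 = D2 := by
      rw [hD2, map_add, map_add, map_mul, map_pow, map_pow, hτW, hτT]
      linear_combination (W * T + T ^ 2) * hchar
    have hτ3 : τ D3 = D3 := by
      rw [hD3, map_mul, map_mul, map_add, hτW, hτT]
      linear_combination (W * T ^ 2 + T ^ 3) * hchar
    rw [Fin.sum_univ_three] at hc
    have h1 : (c 0 : P) + (c 1 : P) * W + (c 2 : P) * W ^ 2 = 0 := by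
      rw [← hc]; norm_num
    have h2 : (c 0 : P) + (c 1 : P) * T + (c 2 : P) * T ^ 2 = 0 := by
      have := congrArg σ h1
      rw [map_zero, map_add, map_add, map_mul, map_mul, map_pow, hσW,
        fix σ hσ2 hσ3 _ (c 0).2, fix σ hσ2 hσ3 _ (c 1).2, fix σ hσ2 hσ3 _ (c 2).2] at this
      exact this
    have h3 : (c 0 : P) + (c 1 : P) * (W + T) + (c 2 : P) * (W + T) ^ 2 = 0 := by
      have := congrArg τ h1
      rw [map_zero, map_add, map_add, map_mul, map_mul, map_pow, hτW,
        fix τ hτ2 hτ3 _ (c 0).2, fix τ hτ2 hτ3 _ (c 1).2, fix τ hτ2 hτ3 _ (c 2).2] at this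
      exact this
    have hne : (X 0 + X 1 : MvPolynomial (Fin 2) (ZMod 2)) ≠ 0 := by
      intro h
      have := congrArg (coeff (Finsupp.single 0 1)) h
      simp [coeff_X, coeff_X', Finsupp.single_eq_single_iff] at this
    have hKne : W * T * (W + T) ≠ 0 := by
      rw [hW, hT]
      exact mul_ne_zero (mul_ne_zero (X_ne_zero 0) (X_ne_zero 1)) hne
    have hc2 : (c 2 : P) = 0 := by
      have h : (c 2 : P) * (W * T * (W + T)) = 0 := by
        linear_combination W * h1 + T * h2 + (W + T) * h3
          - ((c 0 : P) * (W + T) + (c 1 : P) * (W ^ 2 + W * T + T ^ 2)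
          + (c 2 : P) * (W ^ 3 + W ^ 2 * T + W * T ^ 2 + T ^ 3)) * hchar
      rcases mul_eq_zero.1 h with h | h
      · exact h
      · exact absurd h hKne
    have hc1 : (c 1 : P) = 0 := by
      have h : (c 1 : P) * (W * T * (W + T)) = 0 := by
        linear_combination W ^ 2 * h1 + T ^ 2 * h2 + (W ^ 2 + T ^ 2) * h3
          - ((c 0 : P) * (W ^ 2 + T ^ 2) + (c 1 : P) * (W ^ 3 + T ^ 3)
          + (c 2 : P) * (W ^ 4 + W ^ 3 * T + W ^ 2 * T ^ 2 + W * T ^ 3 + T ^ 4)) * hchar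
      rcases mul_eq_zero.1 h with h | h
      · exact h
      · exact absurd h hKne
    have hc0 : (c 0 : P) = 0 := by
      linear_combination h1 - hc1 * W - hc2 * W ^ 2
    fin_cases i
    · exact Subtype.ext hc0
    · exact Subtype.ext hc1
    · exact Subtype.ext hc2
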